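/- Let μ, μ̄, σ, σ̄ > 0 and ρ ∈ [0, 1), set a := μ/μ̄ and b := σ/σ̄, and assume (a + b²) − ρb(a + 1) ≠ 0. Define f(θ) := (θμ + (1−θ)μ̄)² / (θ²σ² + 2ρθ(1−θ)σσ̄ + (1−θ)²σ̄²) and θ* := (a − ρb)/((a + b²) − ρb(a + 1)). Then the denominator θ²σ² + 2ρθ(1−θ)σσ̄ + (1−θ)²σ̄² is strictly positive for every θ ∈ ℝ, f is differentiable at θ*, and f′(θ*) = 0. -/

import Mathlib

theorem optimal_mixing_first_order
    (μ μbar σ σbar ρ : ℝ) (hμ : 0 < μ) (hμbar : 0 < μbar)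
    (hσ : 0 < σ) (hσbar : 0 < σbar) (hρ0 : 0 ≤ ρ) (hρ1 : ρ < 1)
    (a b : ℝ) (ha : a = μ / μbar) (hb : b = σ / σbar)
    (hden : (a + b ^ 2) - ρ * b * (a + 1) ≠ 0)
    (f : ℝ → ℝ)
    (hf : f = fun θ => (θ * μ + (1 - θ) * μbar) ^ 2 /
      (θ ^ 2 * σ ^ 2 + 2 * ρ * θ * (1 - θ) * σ * σbar + (1 - θ) ^ 2 * σbar ^ 2))
    (θstar : ℝ)
    (hθstar : θstar = (a - ρ * b) / ((a + b ^ 2) - ρ * b * (a + 1))) :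
    (∀ θ : ℝ, 0 < θ ^ 2 * σ ^ 2 + 2 * ρ * θ * (1 - θ) * σ * σbar
        + (1 - θ) ^ 2 * σbar ^ 2)
    ∧ DifferentiableAt ℝ f θstar
    ∧ deriv f θstar = 0 := by
  subst ha hb
  have hμbar' : μbar ≠ 0 := hμbar.ne'
  have hσbar' : σbar ≠ 0 := hσbar.ne'
  -- positivity of the denominator
  have hpos : ∀ θ : ℝ, 0 < θ ^ 2 * σ ^ 2 + 2 * ρ * θ * (1 - θ) * σ * σbar
      + (1 - θ) ^ 2 * σbar ^ 2 := by
    intro θ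
    rcases eq_or_ne θ 0 with h | h
    · subst h; simpa using by positivity
    · have h1 : 0 < θ ^ 2 * σ ^ 2 := by positivity
      nlinarith [mul_pos (sub_pos.2 hρ1) h1,
        mul_nonneg hρ0 (sq_nonneg (θ * σ + (1 - θ) * σbar)),
        mul_nonneg (sub_pos.2 hρ1).le (sq_nonneg ((1 - θ) * σbar))]
  have hQ : μ * σbar ^ 2 + μbar * σ ^ 2 - ρ * σ * σbar * (μ + μbar) ≠ 0 := by
    intro h
    apply hden
    have hrw : μ / μbar + (σ / σbar) ^ 2 - ρ * (σ / σbar) * (μ / μbar + 1)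
        = (μ * σbar ^ 2 + μbar * σ ^ 2 - ρ * σ * σbar * (μ + μbar)) / (μbar * σbar ^ 2) := by
      field_simp
    rw [hrw, h, zero_div]
  have hθP : θstar = (μ * σbar ^ 2 - ρ * σ * σbar * μbar) /
      (μ * σbar ^ 2 + μbar * σ ^ 2 - ρ * σ * σbar * (μ + μbar)) := by
    rw [hθstar, div_eq_div_iff hden hQ]
    field_simp
  -- derivative of numerator
  have hN0 : HasDerivAt (fun θ : ℝ => θ * μ + (1 - θ) * μbar) (μ - μbar) θstar := by
    have := ((hasDerivAt_id θstar).mul_const μ).add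
      (((hasDerivAt_const θstar (1 : ℝ)).sub (hasDerivAt_id θstar)).mul_const μbar)
    exact this.congr_deriv (by ring)
  have hNd : HasDerivAt (fun θ : ℝ => (θ * μ + (1 - θ) * μbar) ^ 2)
      (2 * (θstar * μ + (1 - θstar) * μbar) * (μ - μbar)) θstar := by
    have := hN0.pow 2
    exact this.congr_deriv (by norm_num)
  -- derivative of denominator
  have hDd : HasDerivAt (fun θ : ℝ => θ ^ 2 * σ ^ 2 + 2 * ρ * θ * (1 - θ) * σ * σbar
      + (1 - θ) ^ 2 * σbar ^ 2)
      (2 * θstar * σ ^ 2 + 2 * ρ * (1 - 2 * θstar) * σ * σbar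
        - 2 * (1 - θstar) * σbar ^ 2) θstar := by
    have hfun : (fun θ : ℝ => θ ^ 2 * σ ^ 2 + 2 * ρ * θ * (1 - θ) * σ * σbar
        + (1 - θ) ^ 2 * σbar ^ 2)
        = fun θ : ℝ => σbar ^ 2 + (2 * ρ * σ * σbar - 2 * σbar ^ 2) * θ
          + (σ ^ 2 - 2 * ρ * σ * σbar + σbar ^ 2) * θ ^ 2 := by
      funext θ; ring
    rw [hfun]
    have := ((hasDerivAt_const θstar (σbar ^ 2)).add
      ((hasDerivAt_id θstar).const_mul (2 * ρ * σ * σbar - 2 * σbar ^ 2))).add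
      ((hasDerivAt_pow 2 θstar).const_mul (σ ^ 2 - 2 * ρ * σ * σbar + σbar ^ 2))
    exact this.congr_deriv (by simp; ring)
  have hDne : θstar ^ 2 * σ ^ 2 + 2 * ρ * θstar * (1 - θstar) * σ * σbar
      + (1 - θstar) ^ 2 * σbar ^ 2 ≠ 0 := (hpos θstar).ne'
  have hdiv := hNd.div hDd hDne
  have hkey : 2 * (μ - μbar) * (θstar ^ 2 * σ ^ 2 + 2 * ρ * θstar * (1 - θstar) * σ * σbar
      + (1 - θstar) ^ 2 * σbar ^ 2)
      - (θstar * μ + (1 - θstar) * μbar) * (2 * θstar * σ ^ 2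
        + 2 * ρ * (1 - 2 * θstar) * σ * σbar - 2 * (1 - θstar) * σbar ^ 2) = 0 := by
    have hθQ : θstar * (μ * σbar ^ 2 + μbar * σ ^ 2 - ρ * σ * σbar * (μ + μbar))
        = μ * σbar ^ 2 - ρ * σ * σbar * μbar := by
      rw [hθP]; exact div_mul_cancel₀ _ hQ
    have hE : (μ * σbar ^ 2 + μbar * σ ^ 2 - ρ * σ * σbar * (μ + μbar)) *
        (2 * (μ - μbar) * (θstar ^ 2 * σ ^ 2 + 2 * ρ * θstar * (1 - θstar) * σ * σbar
        + (1 - θstar) ^ 2 * σbar ^ 2)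
        - (θstar * μ + (1 - θstar) * μbar) * (2 * θstar * σ ^ 2
          + 2 * ρ * (1 - 2 * θstar) * σ * σbar - 2 * (1 - θstar) * σbar ^ 2)) = 0 := by
      linear_combination ((μ - μbar) * (2 * ρ * σ * σbar - 2 * σbar ^ 2)
        - 2 * μbar * (σ ^ 2 - 2 * ρ * σ * σbar + σbar ^ 2)) * hθQ
    exact (mul_eq_zero.mp hE).resolve_left hQ
  have hv : (2 * (θstar * μ + (1 - θstar) * μbar) * (μ - μbar)
      * (θstar ^ 2 * σ ^ 2 + 2 * ρ * θstar * (1 - θstar) * σ * σbar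
        + (1 - θstar) ^ 2 * σbar ^ 2)
      - (θstar * μ + (1 - θstar) * μbar) ^ 2 * (2 * θstar * σ ^ 2
        + 2 * ρ * (1 - 2 * θstar) * σ * σbar - 2 * (1 - θstar) * σbar ^ 2))
      / (θstar ^ 2 * σ ^ 2 + 2 * ρ * θstar * (1 - θstar) * σ * σbar
        + (1 - θstar) ^ 2 * σbar ^ 2) ^ 2 = 0 := by
    rw [show (2 * (θstar * μ + (1 - θstar) * μbar) * (μ - μbar)
      * (θstar ^ 2 * σ ^ 2 + 2 * ρ * θstar * (1 - θstar) * σ * σbar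
        + (1 - θstar) ^ 2 * σbar ^ 2)
      - (θstar * μ + (1 - θstar) * μbar) ^ 2 * (2 * θstar * σ ^ 2
        + 2 * ρ * (1 - 2 * θstar) * σ * σbar - 2 * (1 - θstar) * σbar ^ 2))
      = (θstar * μ + (1 - θstar) * μbar)
        * (2 * (μ - μbar) * (θstar ^ 2 * σ ^ 2 + 2 * ρ * θstar * (1 - θstar) * σ * σbar
          + (1 - θstar) ^ 2 * σbar ^ 2)
          - (θstar * μ + (1 - θstar) * μbar) * (2 * θstar * σ ^ 2
            + 2 * ρ * (1 - 2 * θstar) * σ * σbar - 2 * (1 - θstar) * σbar ^ 2)) from by ring,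
      hkey, mul_zero, zero_div]
  have hF : HasDerivAt f 0 θstar := by
    rw [hf]
    exact hv ▸ hdiv
  exact ⟨hpos, hF.differentiableAt, hF.deriv⟩
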